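/- Let I be a countable family of nondegenerate closed intervals in ℝ. Define x ~ y iff for every ε > 0 there is a finite chain I₁, …, I_N of intervals from I such that the separation distances sep({x}, I₁), sep(I₁, I₂), …, sep(I_N, {y}) are all at most ε. Then ~ is an equivalence relation on ℝ and each equivalence class is a closed set. -/

import Mathlib

/-- The separation distance between two subsets of `ℝ`. -/
noncomputable def sep (A B : Set ℝ) : ℝ :=
  sInf {d : ℝ | ∃ a ∈ A, ∃ b ∈ B, d = |a - b|}

/-- A nondegenerate closed interval (possibly a half-line or all of `ℝ`). -/
def IsNondegClosedInterval (J : Set ℝ) : Prop :=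
  IsClosed J ∧ J.OrdConnected ∧ ∃ a ∈ J, ∃ b ∈ J, a < b

/-- `x` and `y` are related iff for every `ε > 0` there is a finite `ε`-chain of
intervals from `I` connecting `x` to `y`. -/
def chainRel (I : Set (Set ℝ)) (x y : ℝ) : Prop :=
  ∀ ε > (0 : ℝ), ∃ L : List (Set ℝ), (∀ J ∈ L, J ∈ I) ∧
    List.Chain' (fun A B => sep A B ≤ ε) ({x} :: (L ++ [{y}]))

lemma sep_nonneg' (A B : Set ℝ) : 0 ≤ sep A B := by
  apply Real.sInf_nonneg
  rintro d ⟨a, _, b, _, rfl⟩; positivity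

lemma sep_le' {A B : Set ℝ} {a b : ℝ} (ha : a ∈ A) (hb : b ∈ B) : sep A B ≤ |a - b| :=
  csInf_le ⟨0, by rintro d ⟨a, _, b, _, rfl⟩; positivity⟩ ⟨a, ha, b, hb, rfl⟩

lemma sep_comm' (A B : Set ℝ) : sep A B = sep B A := by
  unfold sep; congr 1; ext d
  constructor <;> rintro ⟨a, ha, b, hb, rfl⟩ <;> exact ⟨b, hb, a, ha, abs_sub_comm _ _⟩

lemma sep_triangle' {A B : Set ℝ} (hA : A.Nonempty) (hB : B.Nonempty) (y : ℝ) :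
    sep A B ≤ sep A {y} + sep {y} B := by
  refine le_of_forall_pos_lt_add ?_
  intro δ hδ
  obtain ⟨a0, ha0⟩ := hA
  obtain ⟨b0, hb0⟩ := hB
  obtain ⟨d1, hd1mem, hd1⟩ := Real.lt_sInf_add_pos
    (s := {d : ℝ | ∃ a ∈ A, ∃ b ∈ ({y} : Set ℝ), d = |a - b|})
    ⟨|a0 - y|, a0, ha0, y, rfl, rfl⟩ (half_pos hδ)
  obtain ⟨a, ha, b', hb', rfl⟩ := hd1mem
  obtain ⟨d2, hd2mem, hd2⟩ := Real.lt_sInf_add_pos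
    (s := {d : ℝ | ∃ a ∈ ({y} : Set ℝ), ∃ b ∈ B, d = |a - b|})
    ⟨|y - b0|, y, rfl, b0, hb0, rfl⟩ (half_pos hδ)
  obtain ⟨a', ha', b, hb, rfl⟩ := hd2mem
  rw [Set.mem_singleton_iff] at hb' ha'
  subst hb'; subst ha'
  have h1 : sep A B ≤ |a - b| := sep_le' ha hb
  have h2 : |a - b| ≤ |a - a'| + |a' - b| := abs_sub_le a a' b
  unfold sep at h1 ⊢
  linarith

lemma glue' {ε₁ ε₂ : ℝ} (h₁ : 0 ≤ ε₁) (h₂ : 0 ≤ ε₂) (y : ℝ) :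
    ∀ l1 l2 : List (Set ℝ), l1 ≠ [] → l2 ≠ [] →
    (∀ A ∈ l1, A.Nonempty) → (∀ A ∈ l2, A.Nonempty) →
    List.Chain' (fun A B => sep A B ≤ ε₁) (l1 ++ [{y}]) →
    List.Chain' (fun A B => sep A B ≤ ε₂) ({y} :: l2) →
    List.Chain' (fun A B => sep A B ≤ ε₁ + ε₂) (l1 ++ l2) := by
  intro l1
  induction l1 with
  | nil => intro _ h; exact absurd rfl h
  | cons a l1' ih =>
    intro l2 _ hl2 hne1 hne2 hc1 hc2
    match l1', l2 with
    | _, [] => exact absurd rfl hl2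
    | [], b :: l2' =>
      simp only [List.nil_append, List.singleton_append] at hc1 ⊢
      rw [List.Chain', List.isChain_pair] at hc1
      rw [List.Chain', List.isChain_cons_cons] at hc2
      rw [List.Chain', List.isChain_cons_cons]
      constructor
      · calc sep a b ≤ sep a {y} + sep {y} b :=
              sep_triangle' (hne1 a (by simp)) (hne2 b (by simp)) y
          _ ≤ ε₁ + ε₂ := add_le_add hc1 hc2.1
      · exact hc2.2.imp (fun A B h => by linarith)
    | c :: rest, l2 =>
      have hc1' : List.Chain' (fun A B => sep A B ≤ ε₁) (a :: (c :: (rest ++ [{y}]))) := by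
        simpa using hc1
      rw [List.Chain', List.isChain_cons_cons] at hc1'
      have ihr := ih l2 (by simp) hl2 (fun A hA => hne1 A (by simp [hA])) hne2
        (by simpa [List.Chain'] using hc1'.2) hc2
      have : (a :: c :: rest) ++ l2 = a :: (c :: (rest ++ l2)) := by simp
      rw [this, List.Chain', List.isChain_cons_cons]
      exact ⟨le_trans hc1'.1 (by linarith), by simpa [List.Chain'] using ihr⟩

/-- For a countable family of nondegenerate closed intervals, the chain relation is an
equivalence relation on `ℝ` whose equivalence classes are closed subsets of `ℝ`. -/
theorem stmt_3 (I : Set (Set ℝ)) (hcount : I.Countable)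
    (hI : ∀ J ∈ I, IsNondegClosedInterval J) :
    Equivalence (chainRel I) ∧ ∀ x : ℝ, IsClosed {y : ℝ | chainRel I x y} := by
  have hne : ∀ J ∈ I, (J : Set ℝ).Nonempty := by
    intro J hJ
    obtain ⟨_, _, a, ha, _⟩ := hI J hJ
    exact ⟨a, ha⟩
  have hmem_ne : ∀ (w : ℝ) (L : List (Set ℝ)), (∀ J ∈ L, J ∈ I) →
      ∀ A ∈ ({w} :: L : List (Set ℝ)), A.Nonempty := by
    intro w L hL A hA
    rcases List.mem_cons.mp hA with rfl | h
    · exact Set.singleton_nonempty w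
    · exact hne A (hL A h)
  have hrefl : ∀ x : ℝ, chainRel I x x := by
    intro x ε hε
    refine ⟨[], by simp, ?_⟩
    simp only [List.nil_append]
    rw [List.Chain', List.isChain_pair]
    have := sep_le' (Set.mem_singleton x) (Set.mem_singleton x)
    simp at this
    linarith
  have hsymm : ∀ {x y : ℝ}, chainRel I x y → chainRel I y x := by
    intro x y h ε hε
    obtain ⟨L, hL, hc⟩ := h ε hε
    refine ⟨L.reverse, fun J hJ => hL J (List.mem_reverse.mp hJ), ?_⟩
    have heq : ({y} :: (L.reverse ++ [{x}]) : List (Set ℝ))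
        = ({x} :: (L ++ [{y}])).reverse := by simp
    rw [heq, List.Chain', List.isChain_reverse]
    exact hc.imp fun A B h => by rw [sep_comm']; exact h
  have htrans : ∀ {x y z : ℝ}, chainRel I x y → chainRel I y z → chainRel I x z := by
    intro x y z hxy hyz ε hε
    obtain ⟨L1, hL1, hc1⟩ := hxy (ε/2) (half_pos hε)
    obtain ⟨L2, hL2, hc2⟩ := hyz (ε/2) (half_pos hε)
    refine ⟨L1 ++ L2, ?_, ?_⟩
    · intro J hJ
      rcases List.mem_append.mp hJ with h | h
      · exact hL1 J h
      · exact hL2 J h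
    · have hg := glue' (le_of_lt (half_pos hε)) (le_of_lt (half_pos hε)) y
        ({x} :: L1) (L2 ++ [{z}]) (by simp) (by simp)
        (hmem_ne x L1 hL1)
        (by
          intro A hA
          rcases List.mem_append.mp hA with h | h
          · exact hne A (hL2 A h)
          · simp at h; subst h; exact Set.singleton_nonempty z)
        (by simpa using hc1) hc2
      have heq : (({x} :: L1) ++ (L2 ++ [{z}]) : List (Set ℝ))
          = {x} :: ((L1 ++ L2) ++ [{z}]) := by simp
      rw [heq] at hg
      exact hg.imp fun A B h => by linarith
  refine ⟨⟨hrefl, hsymm, htrans⟩, ?_⟩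
  intro x
  apply isClosed_of_closure_subset
  intro y hy
  intro ε hε
  obtain ⟨y', hy', hdist⟩ := Metric.mem_closure_iff.mp hy (ε/2) (half_pos hε)
  obtain ⟨L, hL, hc⟩ := hy' (ε/2) (half_pos hε)
  refine ⟨L, hL, ?_⟩
  have hc2 : List.Chain' (fun A B => sep A B ≤ ε/2) ({y'} :: [{y}] : List (Set ℝ)) := by
    rw [List.Chain', List.isChain_pair]
    calc sep {y'} {y} ≤ |y' - y| := sep_le' rfl rfl
      _ ≤ ε/2 := by rw [abs_sub_comm]; rw [Real.dist_eq] at hdist; linarith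
  have hg := glue' (le_of_lt (half_pos hε)) (le_of_lt (half_pos hε)) y'
    ({x} :: L) [{y}] (by simp) (by simp)
    (hmem_ne x L hL)
    (by intro A hA; simp at hA; subst hA; exact Set.singleton_nonempty y)
    (by simpa using hc) hc2
  have heq : (({x} :: L) ++ [{y}] : List (Set ℝ)) = {x} :: (L ++ [{y}]) := by simp
  rw [heq] at hg
  exact hg.imp fun A B h => by linarith
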